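/- Let S be a metric space, (μ_n) Borel probability measures on S converging weakly to μ, (f_n) measurable extended-real-valued functions on S, and (g_n) real-valued measurable functions with f_n ≥ g_n pointwise and the g_n uniformly bounded above by a constant. Then the condition '−∞ < ∫_S limsup_{n→∞, s'→s} g_n(s') dμ(s) ≤ liminf_n ∫ g_n dμ_n' is equivalent to '∫_S limsup_{n→∞, s'→s} g_n(s') dμ(s) = lim_n ∫ g_n dμ_n > −∞' (in particular the limit exists). -/

import Mathlib

open MeasureTheory Filter Topology ENNReal

/-- The positive part of an extended real number, as an element of `ℝ≥0∞`. -/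
noncomputable def eposPart (x : EReal) : ℝ≥0∞ :=
  if x = ⊤ then ⊤ else ENNReal.ofReal x.toReal

/-- The integral of an extended-real-valued function: `∫ f⁺ dμ − ∫ f⁻ dμ`. -/
noncomputable def eintegral {S : Type*} [MeasurableSpace S]
    (μ : MeasureTheory.Measure S) (f : S → EReal) : EReal :=
  ((∫⁻ s, eposPart (f s) ∂μ : ℝ≥0∞) : EReal) -
    ((∫⁻ s, eposPart (-f s) ∂μ : ℝ≥0∞) : EReal)

/-- The integral of an extended-real-valued function `f` is defined when
`min(∫ f⁺ dμ, ∫ f⁻ dμ) < ∞`. -/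
def EIntegralDefined {S : Type*} [MeasurableSpace S]
    (μ : MeasureTheory.Measure S) (f : S → EReal) : Prop :=
  (∫⁻ s, eposPart (f s) ∂μ) ≠ ⊤ ∨ (∫⁻ s, eposPart (-f s) ∂μ) ≠ ⊤


lemma eposPart_coe (r : ℝ) : eposPart (r : EReal) = ENNReal.ofReal r := by
  simp [eposPart]

lemma eposPart_bot : eposPart ⊥ = 0 := by simp [eposPart]
lemma eposPart_top : eposPart ⊤ = ⊤ := by simp [eposPart]

lemma eposPart_mono : Monotone eposPart := by
  intro x y hxy
  induction x using EReal.rec with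
  | bot => simp [eposPart_bot]
  | top => simp_all [top_le_iff.mp hxy, eposPart_top]
  | coe a =>
    induction y using EReal.rec with
    | bot => simp at hxy
    | top => simp [eposPart_top]
    | coe b =>
      simp only [eposPart_coe]
      exact ENNReal.ofReal_le_ofReal (by exact_mod_cast hxy)

lemma eposPart_surj : Function.Surjective eposPart := by
  intro y
  induction y using ENNReal.recTopCoe with
  | top => exact ⟨⊤, eposPart_top⟩
  | coe r => exact ⟨((r : ℝ) : EReal), by simp [eposPart_coe, ENNReal.ofReal_coe_nnreal]⟩

lemma eposPart_continuous : Continuous eposPart :=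
  eposPart_mono.continuous_of_surjective eposPart_surj

lemma subK_antitone (K : ℝ) : Antitone (fun x : EReal => (K : EReal) - x) := by
  intro x y hxy
  exact EReal.sub_le_sub le_rfl hxy

lemma subK_surj (K : ℝ) : Function.Surjective (fun x : EReal => (K : EReal) - x) := by
  intro y
  refine ⟨(K : EReal) - y, ?_⟩
  induction y using EReal.rec with
  | bot => simp [sub_eq_add_neg]
  | top => simp [sub_eq_add_neg]
  | coe a =>
    simp only [sub_eq_add_neg]
    norm_cast
    ring

lemma subK_continuous (K : ℝ) : Continuous (fun x : EReal => (K : EReal) - x) := by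
  have : Antitone (fun x : EReal => (K : EReal) - x) := subK_antitone K
  exact Monotone.continuous_of_surjective (α := EReal) (β := ERealᵒᵈ) this (subK_surj K)

lemma TK_antitone (K : ℝ) : Antitone (fun x : EReal => eposPart ((K : EReal) - x)) :=
  fun _ _ hxy => eposPart_mono (subK_antitone K hxy)

lemma TK_continuous (K : ℝ) : Continuous (fun x : EReal => eposPart ((K : EReal) - x)) :=
  eposPart_continuous.comp (subK_continuous K)

lemma map_limsup_eposPart {ι : Type*} {F : Filter ι} [F.NeBot] (K : ℝ) (u : ι → EReal) :
    eposPart ((K : EReal) - limsup u F) =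
      liminf (fun i => eposPart ((K : EReal) - u i)) F := by
  exact Antitone.map_limsup_of_continuousAt (TK_antitone K) u ((TK_continuous K).continuousAt)

lemma eposPart_coe_sub (K r : ℝ) :
    eposPart ((K : EReal) - (r : EReal)) = ENNReal.ofReal (K - r) := by
  rw [← EReal.coe_sub, eposPart_coe]

section VSup
variable {S : Type*} [TopologicalSpace S]

noncomputable def vsup (H : ℕ × S → ℝ≥0∞) (m : ℕ) (s : S) : ℝ≥0∞ :=
  ⨆ (U : Set S) (_ : IsOpen U) (_ : s ∈ U), ⨅ p ∈ Set.Ici m ×ˢ U, H p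

lemma vsup_lsc (H : ℕ × S → ℝ≥0∞) (m : ℕ) : LowerSemicontinuous (vsup H m) := by
  intro s t ht
  obtain ⟨U, hU⟩ := lt_iSup_iff.mp ht
  obtain ⟨U_open, hU⟩ := lt_iSup_iff.mp hU
  obtain ⟨hsU, hU⟩ := lt_iSup_iff.mp hU
  filter_upwards [U_open.mem_nhds hsU] with s' hs'
  exact lt_of_lt_of_le hU
    (le_iSup_of_le U (le_iSup_of_le U_open (le_iSup_of_le hs' le_rfl)))

lemma vsup_le_H (H : ℕ × S → ℝ≥0∞) {m n : ℕ} (hmn : m ≤ n) (s : S) :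
    vsup H m s ≤ H (n, s) := by
  refine iSup_le fun U => iSup_le fun _ => iSup_le fun hs => ?_
  exact biInf_le H (by exact ⟨hmn, hs⟩ : (n, s) ∈ Set.Ici m ×ˢ U)

lemma vsup_mono (H : ℕ × S → ℝ≥0∞) (s : S) : Monotone (fun m => vsup H m s) := by
  intro m m' hmm'
  refine iSup_le fun U => iSup_le fun hU => iSup_le fun hs => ?_
  refine le_trans ?_ (le_iSup_of_le U (le_iSup_of_le hU (le_iSup_of_le hs le_rfl)))
  exact le_iInf₂ fun p hp => biInf_le H ⟨le_trans hmm' hp.1, hp.2⟩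

lemma liminf_prod_eq_iSup_vsup (H : ℕ × S → ℝ≥0∞) (s : S) :
    liminf H (atTop ×ˢ 𝓝 s) = ⨆ m, vsup H m s := by
  rw [(atTop_basis.prod (nhds_basis_opens s)).liminf_eq_iSup_iInf]
  simp only [vsup]
  apply le_antisymm
  · refine iSup₂_le fun i hi => ?_
    obtain ⟨-, hsU, hUopen⟩ := hi
    refine le_iSup_of_le i.1 ?_
    exact le_iSup_of_le i.2 (le_iSup_of_le hUopen (le_iSup_of_le hsU le_rfl))
  · refine iSup_le fun m => iSup_le fun U => iSup_le fun hUopen => iSup_le fun hsU => ?_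
    exact le_iSup_of_le (m, U) (le_iSup_of_le ⟨trivial, hsU, hUopen⟩ le_rfl)

end VSup

section LSC
variable {S : Type*} [MeasurableSpace S] [TopologicalSpace S] [OpensMeasurableSpace S]

lemma lintegral_le_liminf_of_lsc {μ : Measure S} {μs : ℕ → Measure S}
    (h_opens : ∀ G, IsOpen G → μ G ≤ atTop.liminf (fun i => μs i G))
    {w : S → ℝ≥0∞} (w_lsc : LowerSemicontinuous w) (c : ℝ)
    (hw : ∀ s, w s ≤ ENNReal.ofReal c) :
    ∫⁻ s, w s ∂μ ≤ atTop.liminf (fun i => ∫⁻ s, w s ∂(μs i)) := by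
  have w_ne_top : ∀ s, w s ≠ ⊤ := fun s => ne_top_of_le_ne_top ENNReal.ofReal_ne_top (hw s)
  have w_mble : Measurable w := w_lsc.measurable
  set wr : S → ℝ := fun s => (w s).toReal with hwr
  have wr_nn : 0 ≤ wr := fun s => ENNReal.toReal_nonneg
  have key : ∀ (ν : Measure S), ∫⁻ s, w s ∂ν = ∫⁻ t in Set.Ioi 0, ν {a | t < wr a} := by
    intro ν
    rw [← lintegral_eq_lintegral_meas_lt ν (Eventually.of_forall wr_nn) (w_mble.ennreal_toReal).aemeasurable]
    congr 1
    funext s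
    rw [ENNReal.ofReal_toReal (w_ne_top s)]
  have set_eq : ∀ t : ℝ, 0 < t → {a | t < wr a} = {a | ENNReal.ofReal t < w a} := by
    intro t ht
    ext a
    simp only [Set.mem_setOf_eq, hwr]
    rw [ENNReal.ofReal_lt_iff_lt_toReal ht.le (w_ne_top a)]
  have open_sets : ∀ t : ℝ, 0 < t → IsOpen {a | t < wr a} := by
    intro t ht
    rw [set_eq t ht]
    exact w_lsc.isOpen_preimage _
  calc ∫⁻ s, w s ∂μ = ∫⁻ t in Set.Ioi 0, μ {a | t < wr a} := key μ
    _ ≤ ∫⁻ t in Set.Ioi 0, atTop.liminf (fun i => μs i {a | t < wr a}) := by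
        refine setLIntegral_mono' measurableSet_Ioi fun t ht => ?_
        exact h_opens _ (open_sets t ht)
    _ ≤ atTop.liminf (fun i => ∫⁻ t in Set.Ioi 0, μs i {a | t < wr a}) :=
        lintegral_liminf_le (fun n => Antitone.measurable (fun s t hst =>
          measure_mono (fun ω hω => lt_of_le_of_lt hst hω)))
    _ = atTop.liminf (fun i => ∫⁻ s, w s ∂(μs i)) := by
        simp only [fun i => key (μs i)]

end LSC

lemma ereal_coe_eposPart {y : EReal} (hy : 0 ≤ y) :
    ((eposPart y : ℝ≥0∞) : EReal) = y := by
  induction y using EReal.rec with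
  | bot => simp at hy
  | top => simp [eposPart_top]
  | coe r =>
    rw [eposPart_coe, EReal.coe_ennreal_ofReal]
    have : (0:ℝ) ≤ r := by exact_mod_cast hy
    simp [max_eq_left this]

lemma ereal_sub_sub_cancel (K : ℝ) (x : EReal) (hx : x ≠ ⊤) :
    (K : EReal) - ((K : EReal) - x) = x := by
  induction x using EReal.rec with
  | bot => simp [EReal.sub_top]
  | top => simp at hx
  | coe r =>
    rw [← EReal.coe_sub, ← EReal.coe_sub]
    ring_nf

lemma ereal_neg_eq_sub (K : ℝ) (x : EReal) (hx : x ≠ ⊤) :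
    -x = ((K : EReal) - x) - (K : EReal) := by
  induction x using EReal.rec with
  | bot => simp [sub_eq_add_neg]
  | top => simp at hx
  | coe r =>
    rw [← EReal.coe_sub, ← EReal.coe_sub, ← EReal.coe_neg]
    norm_cast
    ring

lemma eposPart_add_identity (K : ℝ) (hK0 : 0 ≤ K) {x : EReal} (hx : x ≤ (K : EReal)) :
    eposPart x + eposPart ((K : EReal) - x) = ENNReal.ofReal K + eposPart (-x) := by
  induction x using EReal.rec with
  | bot => simp [eposPart_bot, eposPart_top, EReal.sub_bot]
  | top => exact absurd hx (by simp)
  | coe r =>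
    rw [eposPart_coe, ← EReal.coe_sub, eposPart_coe, ← EReal.coe_neg, eposPart_coe]
    have hrK : r ≤ K := by exact_mod_cast hx
    rcases le_or_gt 0 r with hr | hr
    · rw [ENNReal.ofReal_of_nonpos (by linarith : -r ≤ 0), add_zero,
        ← ENNReal.ofReal_add hr (by linarith : (0:ℝ) ≤ K - r)]
      ring_nf
    · rw [ENNReal.ofReal_of_nonpos hr.le, zero_add,
        ← ENNReal.ofReal_add hK0 (by linarith : (0:ℝ) ≤ -r)]
      ring_nf

lemma ereal_sub_eq_of_add {A B C K' : ℝ≥0∞} (hA : A ≠ ⊤) (hK' : K' ≠ ⊤)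
    (h : A + C = K' + B) : (A : EReal) - (B : EReal) = (K' : EReal) - (C : EReal) := by
  by_cases hB : B = ⊤
  · have hC : C = ⊤ := by
      by_contra hC
      have : A + C = ⊤ := by rw [h, hB, add_top]
      exact (ENNReal.add_ne_top.mpr ⟨hA, hC⟩) this
    rw [hB, hC]
    simp [EReal.coe_ennreal_top, EReal.sub_top]
  · have hC : C ≠ ⊤ := by
      intro hC
      rw [hC, add_top] at h
      exact (ENNReal.add_ne_top.mpr ⟨hK', hB⟩) h.symm
    have hreal : A.toReal + C.toReal = K'.toReal + B.toReal := by
      rw [← ENNReal.toReal_add hA hC, ← ENNReal.toReal_add hK' hB, h]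
    rw [← ENNReal.ofReal_toReal hA, ← ENNReal.ofReal_toReal hB,
      ← ENNReal.ofReal_toReal hK', ← ENNReal.ofReal_toReal hC]
    rw [EReal.coe_ennreal_ofReal, EReal.coe_ennreal_ofReal,
      EReal.coe_ennreal_ofReal, EReal.coe_ennreal_ofReal]
    rw [max_eq_left ENNReal.toReal_nonneg, max_eq_left ENNReal.toReal_nonneg,
      max_eq_left ENNReal.toReal_nonneg, max_eq_left ENNReal.toReal_nonneg]
    rw [← EReal.coe_sub, ← EReal.coe_sub]
    exact_mod_cast (by linarith : A.toReal - B.toReal = K'.toReal - C.toReal)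

lemma ereal_sub_nonneg_of_le {K : ℝ} {x : EReal} (hx : x ≤ (K : EReal)) :
    0 ≤ (K : EReal) - x := by
  induction x using EReal.rec with
  | bot => simp [EReal.sub_bot]
  | top => exact absurd hx (by simp)
  | coe r =>
    rw [← EReal.coe_sub]
    exact_mod_cast (by exact_mod_cast sub_nonneg.mpr (by exact_mod_cast hx) : (0:ℝ) ≤ K - r)


lemma eintegral_eq_sub {S : Type*} [MeasurableSpace S]
    (ν : Measure S) [IsProbabilityMeasure ν] {G : S → EReal} (K : ℝ) (hK0 : 0 ≤ K)
    (hGK : ∀ s, G s ≤ (K : EReal))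
    (hmeasC : Measurable (fun s => eposPart ((K : EReal) - G s))) :
    eintegral ν G =
      (K : EReal) - ((∫⁻ s, eposPart ((K : EReal) - G s) ∂ν : ℝ≥0∞) : EReal) := by
  set W : S → ℝ≥0∞ := fun s => eposPart ((K : EReal) - G s) with hW
  have hGne : ∀ s, G s ≠ ⊤ := fun s => ne_top_of_le_ne_top (EReal.coe_ne_top K) (hGK s)
  have hcoeW : ∀ s, ((W s : ℝ≥0∞) : EReal) = (K : EReal) - G s := fun s =>
    ereal_coe_eposPart (ereal_sub_nonneg_of_le (hGK s))
  have hA_eq : ∀ s, eposPart (G s) = eposPart ((K : EReal) - ((W s : ℝ≥0∞) : EReal)) := by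
    intro s
    rw [hcoeW s, ereal_sub_sub_cancel K _ (hGne s)]
  have hB_eq : ∀ s, eposPart (-(G s)) = eposPart (((W s : ℝ≥0∞) : EReal) - (K : EReal)) := by
    intro s
    rw [hcoeW s, ← ereal_neg_eq_sub K _ (hGne s)]
  have coe_mono : Monotone (fun y : ℝ≥0∞ => (y : EReal)) := fun _ _ h =>
    EReal.coe_ennreal_le_coe_ennreal_iff.mpr h
  have hAmeas : Measurable (fun s => eposPart (G s)) := by
    have outer : Antitone (fun y : ℝ≥0∞ => eposPart ((K : EReal) - (y : EReal))) :=
      fun a b hab => eposPart_mono (EReal.sub_le_sub le_rfl (coe_mono hab))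
    have := outer.measurable.comp hmeasC
    simpa [hA_eq, Function.comp_def] using this
  have hBmeas : Measurable (fun s => eposPart (-(G s))) := by
    have outer : Monotone (fun y : ℝ≥0∞ => eposPart ((y : EReal) - (K : EReal))) :=
      fun a b hab => eposPart_mono (EReal.sub_le_sub (coe_mono hab) le_rfl)
    have := outer.measurable.comp hmeasC
    simpa [hB_eq, Function.comp_def] using this
  have hAne : (∫⁻ s, eposPart (G s) ∂ν) ≠ ⊤ := by
    have : (∫⁻ s, eposPart (G s) ∂ν) ≤ ∫⁻ _, ENNReal.ofReal K ∂ν := by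
      refine lintegral_mono fun s => ?_
      have := eposPart_mono (hGK s)
      rwa [eposPart_coe] at this
    rw [lintegral_const, measure_univ, mul_one] at this
    exact ne_top_of_le_ne_top ENNReal.ofReal_ne_top this
  have key : (∫⁻ s, eposPart (G s) ∂ν) + (∫⁻ s, W s ∂ν) =
      ENNReal.ofReal K + (∫⁻ s, eposPart (-(G s)) ∂ν) := by
    have h1 : ∫⁻ s, (eposPart (G s) + W s) ∂ν =
        ∫⁻ s, (ENNReal.ofReal K + eposPart (-(G s))) ∂ν := by
      congr 1
      funext s
      exact eposPart_add_identity K hK0 (hGK s)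
    rwa [lintegral_add_left hAmeas, lintegral_add_left measurable_const,
      lintegral_const, measure_univ, mul_one] at h1
  have main := ereal_sub_eq_of_add hAne ENNReal.ofReal_ne_top key
  rw [eintegral, main, EReal.coe_ennreal_ofReal, max_eq_left hK0]

section Main
variable {S : Type*} [MetricSpace S] [MeasurableSpace S] [BorelSpace S]

lemma h_opens_of_hweak (μs : ℕ → Measure S) (μ : Measure S)
    [∀ n, IsProbabilityMeasure (μs n)] [IsProbabilityMeasure μ]
    (hweak : ∀ h : S → ℝ, Continuous h → (∃ C : ℝ, ∀ s, |h s| ≤ C) →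
      Tendsto (fun n => ∫ s, h s ∂(μs n)) atTop (𝓝 (∫ s, h s ∂μ))) :
    ∀ G : Set S, IsOpen G → μ G ≤ atTop.liminf (fun i => μs i G) := by
  intro G G_open
  let P : ProbabilityMeasure S := ⟨μ, ‹_›⟩
  let Ps : ℕ → ProbabilityMeasure S := fun n => ⟨μs n, inferInstance⟩
  have htend : Tendsto Ps atTop (𝓝 P) := by
    refine ProbabilityMeasure.tendsto_iff_forall_integral_tendsto.mpr fun f => ?_
    exact hweak f f.continuous ⟨‖f‖, fun s => by
      rw [← Real.norm_eq_abs]; exact f.norm_coe_le_norm s⟩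
  exact ProbabilityMeasure.le_liminf_measure_open_of_tendsto htend G_open

lemma fatou_weak (μs : ℕ → Measure S) (μ : Measure S)
    [∀ n, IsProbabilityMeasure (μs n)] [IsProbabilityMeasure μ]
    (h_opens : ∀ G : Set S, IsOpen G → μ G ≤ atTop.liminf (fun i => μs i G))
    (H : ℕ × S → ℝ≥0∞) :
    ∫⁻ s, liminf H (atTop ×ˢ 𝓝 s) ∂μ ≤
      atTop.liminf (fun n => ∫⁻ s, H (n, s) ∂(μs n)) := by
  have hmeas : ∀ m, Measurable (vsup H m) := fun m => (vsup_lsc H m).measurable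
  have step1 : ∫⁻ s, liminf H (atTop ×ˢ 𝓝 s) ∂μ = ⨆ m, ∫⁻ s, vsup H m s ∂μ := by
    rw [← lintegral_iSup hmeas (fun m m' hmm' s => vsup_mono H s hmm')]
    congr 1
    funext s
    exact liminf_prod_eq_iSup_vsup H s
  rw [step1]
  refine iSup_le fun m => ?_
  have step2 : ∫⁻ s, vsup H m s ∂μ = ⨆ c : ℕ, ∫⁻ s, vsup H m s ⊓ (c : ℝ≥0∞) ∂μ := by
    rw [← lintegral_iSup (f := fun (c : ℕ) s => vsup H m s ⊓ (c : ℝ≥0∞)) (fun c => (hmeas m).inf measurable_const)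
      (fun c c' hcc' s => inf_le_inf le_rfl (by exact_mod_cast Nat.cast_le.mpr hcc'))]
    congr 1
    funext s
    rw [← inf_iSup_eq, ENNReal.iSup_natCast, inf_top_eq]
  rw [step2]
  refine iSup_le fun c => ?_
  have lsc_trunc : LowerSemicontinuous (fun s => vsup H m s ⊓ (c : ℝ≥0∞)) := by
    intro s t ht
    simp only [gt_iff_lt, lt_inf_iff] at ht
    filter_upwards [vsup_lsc H m s t ht.1] with s' hs'
    exact lt_inf_iff.mpr ⟨hs', ht.2⟩
  have bdd : ∀ s, vsup H m s ⊓ (c : ℝ≥0∞) ≤ ENNReal.ofReal (c : ℝ) := by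
    intro s
    simp [ENNReal.ofReal_natCast]
  have key := lintegral_le_liminf_of_lsc h_opens lsc_trunc (c : ℝ) bdd
  refine key.trans (liminf_le_liminf ?_)
  filter_upwards [eventually_ge_atTop m] with n hn
  exact lintegral_mono fun s => le_trans inf_le_left (vsup_le_H H hn s)

end Main


/-- For weakly converging probability measures and functions `g_n` uniformly
bounded above, the condition
`−∞ < ∫ limsup_{n,s'→s} g_n dμ ≤ liminf_n ∫ g_n dμ_n` is equivalent to
`∫ limsup_{n,s'→s} g_n dμ = lim_n ∫ g_n dμ_n > −∞` (in particular the limit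
exists). -/
theorem condition_equiv_limit_exists
    {S : Type*} [MetricSpace S] [MeasurableSpace S] [BorelSpace S]
    (μs : ℕ → Measure S) (μ : Measure S)
    [∀ n, IsProbabilityMeasure (μs n)] [IsProbabilityMeasure μ]
    (hweak : ∀ h : S → ℝ, Continuous h → (∃ C : ℝ, ∀ s, |h s| ≤ C) →
      Tendsto (fun n => ∫ s, h s ∂(μs n)) atTop (𝓝 (∫ s, h s ∂μ)))
    (f : ℕ → S → EReal) (hf : ∀ n, Measurable (f n))
    (g : ℕ → S → ℝ) (hg : ∀ n, Measurable (g n))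
    (hfg : ∀ n s, (g n s : EReal) ≤ f n s)
    (K : ℝ) (hK : ∀ n s, g n s ≤ K) :
    ((⊥ < eintegral μ
        (fun s => limsup (fun p : ℕ × S => (g p.1 p.2 : EReal)) (atTop ×ˢ 𝓝 s)) ∧
      eintegral μ
          (fun s => limsup (fun p : ℕ × S => (g p.1 p.2 : EReal)) (atTop ×ˢ 𝓝 s)) ≤
        liminf (fun n => eintegral (μs n) (fun s => (g n s : EReal))) atTop)
      ↔
    (⊥ < eintegral μ
        (fun s => limsup (fun p : ℕ × S => (g p.1 p.2 : EReal)) (atTop ×ˢ 𝓝 s)) ∧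
      Tendsto (fun n => eintegral (μs n) (fun s => (g n s : EReal))) atTop
        (𝓝 (eintegral μ
          (fun s => limsup (fun p : ℕ × S => (g p.1 p.2 : EReal)) (atTop ×ˢ 𝓝 s)))))) := by
  set K₀ : ℝ := max K 0 with hK₀def
  have hK₀0 : 0 ≤ K₀ := le_max_right _ _
  have hK₀ : ∀ n s, g n s ≤ K₀ := fun n s => (hK n s).trans (le_max_left _ _)
  set H : ℕ × S → ℝ≥0∞ := fun p => ENNReal.ofReal (K₀ - g p.1 p.2) with hHdef
  set G : S → EReal :=
    fun s => limsup (fun p : ℕ × S => (g p.1 p.2 : EReal)) (atTop ×ˢ 𝓝 s) with hGdef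
  set L : S → ℝ≥0∞ := fun s => liminf H (atTop ×ˢ 𝓝 s) with hLdef
  set e : ℕ → EReal := fun n => eintegral (μs n) (fun s => (g n s : EReal)) with hedef
  set Cn : ℕ → ℝ≥0∞ := fun n => ∫⁻ s, H (n, s) ∂(μs n) with hCndef
  -- Step A
  have stepA : ∀ s, eposPart ((K₀ : EReal) - G s) = L s := by
    intro s
    rw [hGdef, hLdef]
    have hHrw : H = fun p : ℕ × S => eposPart ((K₀ : EReal) - ((g p.1 p.2 : ℝ) : EReal)) :=
      funext fun p => (eposPart_coe_sub K₀ (g p.1 p.2)).symm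
    rw [hHrw, map_limsup_eposPart K₀ _]
  have hLmeas : Measurable L := by
    have : L = fun s => ⨆ m, vsup H m s := funext fun s => liminf_prod_eq_iSup_vsup H s
    rw [this]
    exact Measurable.iSup fun m => (vsup_lsc H m).measurable
  have hGK : ∀ s, G s ≤ (K₀ : EReal) := by
    intro s
    refine limsup_le_of_le (by isBoundedDefault) ?_
    exact Eventually.of_forall fun p => EReal.coe_le_coe_iff.mpr (hK₀ p.1 p.2)
  -- Step B
  have I_eq : eintegral μ G = (K₀ : EReal) - ((∫⁻ s, L s ∂μ : ℝ≥0∞) : EReal) := by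
    have hmeasC : Measurable (fun s => eposPart ((K₀ : EReal) - G s)) := by
      simpa [funext stepA] using hLmeas
    rw [eintegral_eq_sub μ K₀ hK₀0 hGK hmeasC]
    congr 2
    exact lintegral_congr fun s => stepA s
  -- Step C
  have e_eq : ∀ n, e n = (K₀ : EReal) - ((Cn n : ℝ≥0∞) : EReal) := by
    intro n
    have hcoe : ∀ s : S, ((g n s : ℝ) : EReal) ≤ (K₀ : EReal) :=
      fun s => EReal.coe_le_coe_iff.mpr (hK₀ n s)
    have hpt : (fun s => eposPart ((K₀ : EReal) - ((g n s : ℝ) : EReal))) =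
        fun s => ENNReal.ofReal (K₀ - g n s) := funext fun s => eposPart_coe_sub K₀ (g n s)
    have hmeasC : Measurable (fun s => eposPart ((K₀ : EReal) - ((g n s : ℝ) : EReal))) := by
      rw [hpt]
      exact (measurable_const.sub (hg n)).ennreal_ofReal
    simp only [hedef]
    rw [eintegral_eq_sub (μs n) K₀ hK₀0 hcoe hmeasC, hpt]
  -- Step D
  have hfatou : (∫⁻ s, L s ∂μ) ≤ atTop.liminf Cn := by
    have := fatou_weak μs μ (h_opens_of_hweak μs μ hweak) H
    simpa [hLdef, hCndef] using this
  -- Step E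
  have T'_anti : Antitone (fun x : ℝ≥0∞ => (K₀ : EReal) - (x : EReal)) :=
    fun a b hab => EReal.sub_le_sub le_rfl (EReal.coe_ennreal_le_coe_ennreal_iff.mpr hab)
  have T'_cont : Continuous (fun x : ℝ≥0∞ => (K₀ : EReal) - (x : EReal)) :=
    (subK_continuous K₀).comp continuous_coe_ennreal_ereal
  have map_eq : (K₀ : EReal) - ((atTop.liminf Cn : ℝ≥0∞) : EReal) = atTop.limsup e := by
    have := Antitone.map_liminf_of_continuousAt (F := atTop) T'_anti Cn T'_cont.continuousAt
    rw [this]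
    congr 1
    funext n
    exact (e_eq n).symm
  have hlimsup_le : atTop.limsup e ≤ eintegral μ G := by
    rw [← map_eq, I_eq]
    exact T'_anti hfatou
  constructor
  · rintro ⟨hpos, hle⟩
    refine ⟨hpos, ?_⟩
    have h1 : atTop.liminf e ≤ atTop.limsup e := liminf_le_limsup
    have hlinf : atTop.liminf e = eintegral μ G :=
      le_antisymm (h1.trans hlimsup_le) hle
    have hlsup : atTop.limsup e = eintegral μ G :=
      le_antisymm hlimsup_le (hle.trans h1)
    exact tendsto_of_liminf_eq_limsup hlinf hlsup
  · rintro ⟨hpos, htend⟩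
    exact ⟨hpos, htend.liminf_eq.ge⟩
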